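/- Let Γ be an n×n positive semidefinite complex matrix with all diagonal entries equal to 1 (a correlation matrix). Then for every Hermitian matrix M, the eigenvalue vector of the Schur (entrywise) product Γ ∘ M is majorized by the eigenvalue vector of M. -/

import Mathlib

open Matrix ComplexOrder

namespace Matrix.PosSemidef

/-- The square root of a positive semidefinite matrix, as defined in the older Mathlib. -/
noncomputable def sqrt {𝕜 : Type*} [RCLike 𝕜] {m : Type*} [Fintype m] [DecidableEq m]
    {A : Matrix m m 𝕜} (hA : A.PosSemidef) : Matrix m m 𝕜 :=
  hA.1.eigenvectorUnitary.1 * diagonal ((↑) ∘ (hA.1.eigenvalues · |>.sqrt)) *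
    (star hA.1.eigenvectorUnitary : Matrix m m 𝕜)

lemma posSemidef_sqrt {𝕜 : Type*} [RCLike 𝕜] {m : Type*} [Fintype m] [DecidableEq m]
    {A : Matrix m m 𝕜} (hA : A.PosSemidef) : PosSemidef hA.sqrt := by
  have hD : PosSemidef (diagonal ((↑) ∘ (hA.1.eigenvalues · |>.sqrt)) : Matrix m m 𝕜) := by
    refine posSemidef_diagonal_iff.mpr fun i => ?_
    rw [Function.comp_apply, RCLike.nonneg_iff]
    constructor
    · simp only [RCLike.ofReal_re]
      exact Real.sqrt_nonneg _
    · simp only [RCLike.ofReal_im]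
  have h := hD.mul_mul_conjTranspose_same (hA.1.eigenvectorUnitary : Matrix m m 𝕜)
  unfold sqrt
  convert h using 2
  exact star_eq_conjTranspose _

end Matrix.PosSemidef

namespace Matrix.PosSemidef

lemma sqrt_mul_self_old {m : Type*} [Fintype m] [DecidableEq m] {A : Matrix m m ℂ}
    (hA : A.PosSemidef) : hA.sqrt * hA.sqrt = A := by
  conv_rhs => rw [hA.1.spectral_theorem, Unitary.conjStarAlgAut_apply]
  unfold Matrix.PosSemidef.sqrt
  have hU : (star hA.1.eigenvectorUnitary : Matrix m m ℂ) * hA.1.eigenvectorUnitary.1 = 1 :=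
    Unitary.coe_star_mul_self _
  rw [show ∀ X Y Z : Matrix m m ℂ, X * Y * Z * (X * Y * Z) = X * (Y * (Z * X) * Y) * Z from
    fun X Y Z => by simp only [Matrix.mul_assoc], hU, Matrix.mul_one, diagonal_mul_diagonal]
  congr 3
  funext i
  simp only [Function.comp_apply]
  rw [← RCLike.ofReal_mul, Real.mul_self_sqrt (hA.eigenvalues_nonneg i)]

end Matrix.PosSemidef

namespace Heron

variable {n : ℕ}

def WeakMaj {n : ℕ} (x y : Fin n → ℝ) : Prop :=
  ∀ s : Finset (Fin n), ∃ t : Finset (Fin n),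
    t.card = s.card ∧ ∑ i ∈ s, x i ≤ ∑ i ∈ t, y i

def Maj {n : ℕ} (x y : Fin n → ℝ) : Prop :=
  WeakMaj x y ∧ ∑ i, x i = ∑ i, y i

lemma sandwich_posSemidef {S T : Matrix (Fin n) (Fin n) ℂ} (hS : S.IsHermitian)
    (hT : T.PosSemidef) : (S * T * S).PosSemidef := by
  have h := hT.mul_mul_conjTranspose_same S
  rwa [hS.eq] at h

noncomputable def geomMean {A B : Matrix (Fin n) (Fin n) ℂ}
    (hA : A.PosDef) (hB : B.PosDef) : Matrix (Fin n) (Fin n) ℂ :=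
  hA.posSemidef.sqrt *
    (sandwich_posSemidef hA.posSemidef.posSemidef_sqrt.isHermitian.inv
        hB.posSemidef).sqrt *
    hA.posSemidef.sqrt

lemma geomMean_posSemidef {A B : Matrix (Fin n) (Fin n) ℂ}
    (hA : A.PosDef) (hB : B.PosDef) : (geomMean hA hB).PosSemidef :=
  sandwich_posSemidef hA.posSemidef.posSemidef_sqrt.isHermitian
    (Matrix.PosSemidef.posSemidef_sqrt _)

noncomputable def specMean {A B : Matrix (Fin n) (Fin n) ℂ}
    (hA : A.PosDef) (hB : B.PosDef) : Matrix (Fin n) (Fin n) ℂ :=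
  (geomMean_posSemidef hA.inv hB).sqrt * A * (geomMean_posSemidef hA.inv hB).sqrt

def HasPosSpectrum (M : Matrix (Fin n) (Fin n) ℂ) : Prop :=
  ∀ z ∈ spectrum ℂ M, 0 < z.re ∧ z.im = 0

def IsPrincipalSqrt (M S : Matrix (Fin n) (Fin n) ℂ) : Prop :=
  S * S = M ∧ HasPosSpectrum S

noncomputable def absMat (Y : Matrix (Fin n) (Fin n) ℂ) : Matrix (Fin n) (Fin n) ℂ :=
  (Matrix.posSemidef_conjTranspose_mul_self Y).sqrt

noncomputable def posPart (H : Matrix (Fin n) (Fin n) ℂ) : Matrix (Fin n) (Fin n) ℂ :=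
  ((1 : ℂ) / 2) • (absMat H + H)

open scoped ComplexConjugate

private lemma aux_comb (y q : Fin n → ℝ) (hq0 : ∀ j, 0 ≤ q j) (hq1 : ∀ j, q j ≤ 1)
    (k : ℕ) (hk : ∑ j, q j = k) :
    ∃ t : Finset (Fin n), t.card = k ∧ ∑ j, q j * y j ≤ ∑ j ∈ t, y j := by
  rcases Nat.eq_zero_or_pos k with hk0 | hk0
  · subst hk0
    refine ⟨∅, rfl, ?_⟩
    have hq : ∀ j ∈ Finset.univ, q j = 0 := by
      intro j _
      have := (Finset.sum_eq_zero_iff_of_nonneg (fun j _ => hq0 j)).mp (by simpa using hk)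
      exact this j (Finset.mem_univ j)
    simp only [Finset.sum_empty]
    rw [Finset.sum_congr rfl (fun j hj => by rw [hq j hj, zero_mul])]
    simp
  · -- k ≤ n
    have hkn : k ≤ n := by
      have h1 : (k : ℝ) ≤ n := by
        rw [← hk]
        calc ∑ j, q j ≤ ∑ _j : Fin n, (1:ℝ) := Finset.sum_le_sum fun j _ => hq1 j
          _ = n := by simp
      exact_mod_cast h1
    -- choose t maximizing ∑ y over sets of card k
    have hne : (Finset.powersetCard k (Finset.univ : Finset (Fin n))).Nonempty := by
      rw [Finset.powersetCard_nonempty]; simpa using hkn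
    obtain ⟨t, htmem, htmax⟩ := Finset.exists_max_image _ (fun t => ∑ j ∈ t, y j) hne
    rw [Finset.mem_powersetCard] at htmem
    have htcard : t.card = k := htmem.2
    have htne : t.Nonempty := Finset.card_pos.mp (htcard ▸ hk0)
    obtain ⟨m, hm, hmin⟩ := t.exists_min_image y htne
    set c := y m with hc
    have houtside : ∀ i ∉ t, y i ≤ c := by
      intro i hi
      by_contra hlt
      push_neg at hlt
      set t' := insert i (t.erase m) with ht'
      have hinotin : i ∉ t.erase m := fun h => hi (Finset.mem_of_mem_erase h)
      have ht'card : t'.card = k := by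
        rw [ht', Finset.card_insert_of_notMem hinotin, Finset.card_erase_of_mem hm, htcard]
        omega
      have ht'mem : t' ∈ Finset.powersetCard k Finset.univ := by
        rw [Finset.mem_powersetCard]; exact ⟨Finset.subset_univ _, ht'card⟩
      have hsum' : ∑ j ∈ t', y j = y i + (∑ j ∈ t, y j - y m) := by
        rw [ht', Finset.sum_insert hinotin]
        congr 1
        rw [Finset.sum_erase_eq_sub hm]
      have := htmax t' ht'mem
      rw [hsum'] at this
      linarith
    refine ⟨t, htcard, ?_⟩
    -- main inequality
    have hsplit : ∑ j, q j * y j = ∑ j ∈ t, q j * y j + ∑ j ∈ tᶜ, q j * y j :=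
      (Finset.sum_add_sum_compl t _).symm
    have h1 : ∑ j ∈ tᶜ, q j * y j ≤ ∑ j ∈ tᶜ, q j * c :=
      Finset.sum_le_sum fun j hj =>
        mul_le_mul_of_nonneg_left (houtside j (by simpa using hj)) (hq0 j)
    have h2 : ∑ j ∈ t, (1 - q j) * c ≤ ∑ j ∈ t, (1 - q j) * y j :=
      Finset.sum_le_sum fun j hj =>
        mul_le_mul_of_nonneg_left (hmin j hj) (by linarith [hq1 j])
    have h3 : ∑ j ∈ tᶜ, q j * c = ∑ j ∈ t, (1 - q j) * c := by
      rw [← Finset.sum_mul, ← Finset.sum_mul]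
      congr 1
      have : ∑ j ∈ t, q j + ∑ j ∈ tᶜ, q j = (k : ℝ) := by
        rw [Finset.sum_add_sum_compl t q, hk]
      have hcard : ∑ j ∈ t, (1:ℝ) = (k:ℝ) := by
        rw [Finset.sum_const, htcard]; simp
      simp only [sub_eq_iff_eq_add, Finset.sum_sub_distrib]
      linarith
    have h4 : ∑ j ∈ t, q j * y j + ∑ j ∈ t, (1 - q j) * y j = ∑ j ∈ t, y j := by
      rw [← Finset.sum_add_distrib]
      exact Finset.sum_congr rfl fun j _ => by ring
    linarith


lemma aux_normSq (z : ℂ) : ((‖z‖^2 : ℝ) : ℂ) = conj z * z := by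
  rw [mul_comm, Complex.mul_conj']; push_cast; ring

lemma aux_parseval (b : OrthonormalBasis (Fin n) ℂ (EuclideanSpace ℂ (Fin n)))
    (x : EuclideanSpace ℂ (Fin n)) :
    ∑ j, ((‖(inner ℂ (b j) x : ℂ)‖^2 : ℝ) : ℂ) = ∑ a, ((‖x a‖^2 : ℝ) : ℂ) := by
  calc ∑ j, ((‖(inner ℂ (b j) x : ℂ)‖^2 : ℝ) : ℂ)
      = ∑ j, (inner ℂ x (b j) : ℂ) * inner ℂ (b j) x := by
        refine Finset.sum_congr rfl fun j _ => ?_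
        rw [aux_normSq, ← inner_conj_symm, starRingEnd_self_apply]
    _ = inner ℂ x x := b.sum_inner_mul_inner x x
    _ = ∑ a, ((‖x a‖^2 : ℝ) : ℂ) := by
        rw [PiLp.inner_apply]
        exact Finset.sum_congr rfl fun a _ => by rw [aux_normSq]; exact RCLike.inner_apply' _ _

lemma aux_parseval' (b : OrthonormalBasis (Fin n) ℂ (EuclideanSpace ℂ (Fin n)))
    (x : EuclideanSpace ℂ (Fin n)) :
    ∑ j, ‖(inner ℂ (b j) x : ℂ)‖^2 = ∑ a, ‖x a‖^2 := by
  have := aux_parseval b x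
  exact_mod_cast this

lemma aux_quad {M : Matrix (Fin n) (Fin n) ℂ} (hM : M.IsHermitian)
    (v : EuclideanSpace ℂ (Fin n)) :
    ∑ a, ∑ b, conj (v a) * M a b * v b
      = ∑ j, (hM.eigenvalues j : ℂ) * ((‖(inner ℂ (hM.eigenvectorBasis j) v : ℂ)‖^2 : ℝ) : ℂ) := by
  set w := hM.eigenvectorBasis with hw
  set c : Fin n → ℂ := fun j => (inner ℂ (w j) v : ℂ) with hc
  have hv : ∀ a, v a = ∑ j, c j * w j a := by
    intro a
    conv_lhs => rw [← w.sum_repr' v]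
    rw [WithLp.ofLp_sum, Finset.sum_apply]
    exact Finset.sum_congr rfl fun j _ => rfl
  have heig : ∀ j a, ∑ b, M a b * w j b = (hM.eigenvalues j : ℂ) * w j a := by
    intro j a
    have h := congrFun (hM.mulVec_eigenvectorBasis j) a
    simpa [Matrix.mulVec, dotProduct, Pi.smul_apply, Complex.real_smul] using h
  have hcconj : ∀ j, ∑ a, conj (v a) * w j a = conj (c j) := by
    intro j
    rw [hc]
    simp only [PiLp.inner_apply, RCLike.inner_apply, map_sum, _root_.map_mul,
      starRingEnd_self_apply]
  calc ∑ a, ∑ b, conj (v a) * M a b * v b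
      = ∑ a, ∑ j, conj (v a) * (c j * ((hM.eigenvalues j : ℂ) * w j a)) := by
        refine Finset.sum_congr rfl fun a _ => ?_
        calc ∑ b, conj (v a) * M a b * v b
            = ∑ b, ∑ j, conj (v a) * (c j * (M a b * w j b)) := by
              refine Finset.sum_congr rfl fun b _ => ?_
              rw [hv b, Finset.mul_sum]
              exact Finset.sum_congr rfl fun j _ => by ring
          _ = ∑ j, ∑ b, conj (v a) * (c j * (M a b * w j b)) := Finset.sum_comm
          _ = ∑ j, conj (v a) * (c j * ((hM.eigenvalues j : ℂ) * w j a)) := by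
              refine Finset.sum_congr rfl fun j _ => ?_
              rw [← heig j a, Finset.mul_sum, Finset.mul_sum]
    _ = ∑ j, ∑ a, conj (v a) * (c j * ((hM.eigenvalues j : ℂ) * w j a)) := Finset.sum_comm
    _ = ∑ j, (hM.eigenvalues j : ℂ) * (c j * conj (c j)) := by
        refine Finset.sum_congr rfl fun j _ => ?_
        have : (hM.eigenvalues j : ℂ) * (c j * conj (c j))
            = ∑ a, conj (v a) * (c j * ((hM.eigenvalues j : ℂ) * w j a)) := by
          rw [← hcconj j, Finset.mul_sum, Finset.mul_sum]
          exact Finset.sum_congr rfl fun a _ => by ring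
        exact this.symm
    _ = _ := by
        refine Finset.sum_congr rfl fun j _ => ?_
        rw [aux_normSq]
        ring


/-- Schur multiplication by a correlation matrix produces a
majorized eigenvalue vector (Bapat–Sunder). -/
theorem schur_correlation_majorization {n : ℕ} (Γ M : Matrix (Fin n) (Fin n) ℂ)
    (hΓ : Γ.PosSemidef) (hdiag : ∀ i, Γ i i = 1) (hM : M.IsHermitian)
    (hSchur : (Matrix.hadamard Γ M).IsHermitian) :
    Maj hSchur.eigenvalues hM.eigenvalues := by
  classical
  set A := Matrix.hadamard Γ M with hAdef
  set u := hSchur.eigenvectorBasis with hu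
  set ε := hSchur.eigenvalues with hε
  set w := hM.eigenvectorBasis with hwdef
  set μ := hM.eigenvalues with hμ
  set C := hΓ.sqrt with hCdef
  have hCherm : ∀ a k, C a k = conj (C k a) :=
    fun a k => (hΓ.posSemidef_sqrt.isHermitian.apply a k).symm
  have hΓdecomp : ∀ a b, Γ a b = ∑ k, conj (C k a) * C k b := by
    intro a b
    conv_lhs => rw [← hΓ.sqrt_mul_self_old]
    rw [Matrix.mul_apply]
    exact Finset.sum_congr rfl fun k _ => by rw [show hΓ.sqrt = C from rfl, hCherm a k]
  set vv : Fin n → Fin n → EuclideanSpace ℂ (Fin n) :=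
    fun k i => WithLp.toLp 2 (fun a => C k a * u i a) with hvv
  set q : Fin n → Fin n → Fin n → ℝ :=
    fun j k i => ‖(inner ℂ (w j) (vv k i) : ℂ)‖^2 with hq
  have hq0 : ∀ j k i, 0 ≤ q j k i := fun j k i => by positivity
  -- unit norm facts
  have hbnorm : ∀ (b : OrthonormalBasis (Fin n) ℂ (EuclideanSpace ℂ (Fin n))) (j : Fin n),
      ∑ a, ‖b j a‖^2 = 1 := by
    intro b j
    have h1 : ‖b j‖ = 1 := b.orthonormal.1 j
    rw [EuclideanSpace.norm_eq] at h1
    have := Real.sqrt_eq_one.mp h1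
    simpa using this
  have hCcol : ∀ a, ∑ k, ‖C k a‖^2 = 1 := by
    intro a
    have h1 : (1 : ℂ) = ∑ k, ((‖C k a‖^2 : ℝ) : ℂ) := by
      rw [← hdiag a, hΓdecomp a a]
      exact Finset.sum_congr rfl fun k _ => (aux_normSq _).symm
    exact_mod_cast h1.symm
  -- eigen expansion aux (copied from aux_quad)
  have claim1 : ∀ i, ((ε i : ℝ) : ℂ) = ∑ j, (μ j : ℂ) * ∑ k, ((q j k i : ℝ) : ℂ) := by
    intro i
    have hnorm : ∑ a, conj (u i a) * u i a = 1 := by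
      have h1 := hbnorm u i
      have h2 : ∑ a, conj (u i a) * u i a = ∑ a, ((‖u i a‖^2 : ℝ):ℂ) :=
        Finset.sum_congr rfl fun a _ => (aux_normSq _).symm
      rw [h2]
      push_cast
      exact_mod_cast congrArg (fun r : ℝ => (r : ℂ)) h1
    have heig := congrFun (hSchur.mulVec_eigenvectorBasis i)
    have h0 : ((ε i:ℝ):ℂ) = ∑ a, ∑ b, conj (u i a) * A a b * u i b := by
      calc ((ε i:ℝ):ℂ)
          = (ε i : ℂ) * ∑ a, conj (u i a) * u i a := by rw [hnorm, mul_one]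
        _ = ∑ a, conj (u i a) * ((ε i:ℂ) * u i a) := by
            rw [Finset.mul_sum]
            exact Finset.sum_congr rfl fun a _ => by ring
        _ = ∑ a, conj (u i a) * (A *ᵥ ⇑(u i)) a := by
            refine Finset.sum_congr rfl fun a _ => ?_
            rw [heig a]
            simp [Pi.smul_apply, Complex.real_smul, hε, hu]
        _ = ∑ a, ∑ b, conj (u i a) * A a b * u i b := by
            refine Finset.sum_congr rfl fun a _ => ?_
            have hmv : (A *ᵥ (⇑(u i) : Fin n → ℂ)) a = ∑ b, A a b * u i b := by
              simp [Matrix.mulVec, dotProduct]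
            rw [hmv, Finset.mul_sum]
            exact Finset.sum_congr rfl fun b _ => by ring
    have h1 : ((ε i:ℝ):ℂ) = ∑ k, ∑ a, ∑ b, conj (vv k i a) * M a b * vv k i b := by
      rw [h0]
      calc ∑ a, ∑ b, conj (u i a) * A a b * u i b
          = ∑ a, ∑ b, ∑ k, conj (vv k i a) * M a b * vv k i b := by
            refine Finset.sum_congr rfl fun a _ => Finset.sum_congr rfl fun b _ => ?_
            rw [show A a b = Γ a b * M a b from rfl, hΓdecomp a b]
            simp only [hvv, Finset.sum_mul, Finset.mul_sum, _root_.map_mul]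
            exact Finset.sum_congr rfl fun k _ => by ring
        _ = ∑ a, ∑ k, ∑ b, conj (vv k i a) * M a b * vv k i b :=
            Finset.sum_congr rfl fun a _ => Finset.sum_comm
        _ = ∑ k, ∑ a, ∑ b, conj (vv k i a) * M a b * vv k i b := Finset.sum_comm
    rw [h1]
    calc ∑ k, ∑ a, ∑ b, conj (vv k i a) * M a b * vv k i b
        = ∑ k, ∑ j, (μ j : ℂ) * ((q j k i : ℝ) : ℂ) :=
          Finset.sum_congr rfl fun k _ => aux_quad hM (vv k i)
      _ = ∑ j, ∑ k, (μ j : ℂ) * ((q j k i : ℝ) : ℂ) := Finset.sum_comm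
      _ = ∑ j, (μ j : ℂ) * ∑ k, ((q j k i : ℝ) : ℂ) :=
          Finset.sum_congr rfl fun j _ => (Finset.mul_sum _ _ _).symm
  have claim2 : ∀ i, ∑ j, ∑ k, q j k i = 1 := by
    intro i
    rw [Finset.sum_comm]
    calc ∑ k, ∑ j, q j k i
        = ∑ k, ∑ a, ‖vv k i a‖^2 :=
          Finset.sum_congr rfl fun k _ => aux_parseval' w (vv k i)
      _ = ∑ a, ∑ k, ‖C k a‖^2 * ‖u i a‖^2 := by
          rw [Finset.sum_comm]
          exact Finset.sum_congr rfl fun a _ => Finset.sum_congr rfl fun k _ => by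
            rw [show vv k i a = C k a * u i a from rfl, norm_mul, mul_pow]
      _ = ∑ a, ‖u i a‖^2 := by
          refine Finset.sum_congr rfl fun a _ => ?_
          rw [← Finset.sum_mul, hCcol a, one_mul]
      _ = 1 := hbnorm u i
  have claim3 : ∀ j, ∑ i, ∑ k, q j k i = 1 := by
    intro j
    set g : Fin n → EuclideanSpace ℂ (Fin n) := fun k => WithLp.toLp 2 (fun a => conj (C k a) * w j a) with hg
    have hqg : ∀ k i, q j k i = ‖(inner ℂ (u i) (g k) : ℂ)‖^2 := by
      intro k i
      have : (inner ℂ (u i) (g k) : ℂ) = conj (inner ℂ (w j) (vv k i) : ℂ) := by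
        simp only [PiLp.inner_apply, RCLike.inner_apply, map_sum, _root_.map_mul,
          starRingEnd_self_apply]
        exact Finset.sum_congr rfl fun a _ => by
          rw [show (starRingEnd ℂ) (C k a * u i a)
              = (starRingEnd ℂ) (C k a) * (starRingEnd ℂ) (u i a) from map_mul _ _ _]
          ring
      rw [hq, this, RCLike.norm_conj]
    rw [Finset.sum_comm]
    calc ∑ k, ∑ i, q j k i
        = ∑ k, ∑ i, ‖(inner ℂ (u i) (g k) : ℂ)‖^2 :=
          Finset.sum_congr rfl fun k _ => Finset.sum_congr rfl fun i _ => hqg k i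
      _ = ∑ k, ∑ a, ‖g k a‖^2 :=
          Finset.sum_congr rfl fun k _ => aux_parseval' u (g k)
      _ = ∑ a, ∑ k, ‖C k a‖^2 * ‖w j a‖^2 := by
          rw [Finset.sum_comm]
          exact Finset.sum_congr rfl fun a _ => Finset.sum_congr rfl fun k _ => by
            rw [show g k a = conj (C k a) * w j a from rfl, norm_mul, mul_pow, RCLike.norm_conj]
      _ = ∑ a, ‖w j a‖^2 := by
          refine Finset.sum_congr rfl fun a _ => ?_
          rw [← Finset.sum_mul, hCcol a, one_mul]
      _ = 1 := hbnorm w j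
  have rclaim1 : ∀ i, ε i = ∑ j, μ j * ∑ k, q j k i := by
    intro i
    have := claim1 i
    exact_mod_cast this
  constructor
  · intro s
    have hQ0 : ∀ j, 0 ≤ ∑ i ∈ s, ∑ k, q j k i :=
      fun j => Finset.sum_nonneg fun i _ => Finset.sum_nonneg fun k _ => hq0 j k i
    have hQ1 : ∀ j, (∑ i ∈ s, ∑ k, q j k i) ≤ 1 := by
      intro j
      rw [← claim3 j]
      exact Finset.sum_le_sum_of_subset_of_nonneg (Finset.subset_univ s)
        fun i _ _ => Finset.sum_nonneg fun k _ => hq0 j k i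
    have hQsum : ∑ j, ∑ i ∈ s, ∑ k, q j k i = (s.card : ℝ) := by
      rw [Finset.sum_comm]
      rw [Finset.sum_congr rfl fun i _ => claim2 i]
      simp
    obtain ⟨t, htc, hle⟩ := aux_comb μ (fun j => ∑ i ∈ s, ∑ k, q j k i) hQ0 hQ1 s.card hQsum
    refine ⟨t, htc, ?_⟩
    have hsum : ∑ i ∈ s, ε i = ∑ j, (∑ i ∈ s, ∑ k, q j k i) * μ j := by
      rw [Finset.sum_congr rfl fun i _ => rclaim1 i, Finset.sum_comm]
      refine Finset.sum_congr rfl fun j _ => ?_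
      rw [Finset.sum_mul]
      exact Finset.sum_congr rfl fun i _ => by ring
    rw [hsum]
    exact hle
  · calc ∑ i, ε i = ∑ i, ∑ j, μ j * ∑ k, q j k i :=
          Finset.sum_congr rfl fun i _ => rclaim1 i
      _ = ∑ j, μ j * ∑ i, ∑ k, q j k i := by
          rw [Finset.sum_comm]
          exact Finset.sum_congr rfl fun j _ => (Finset.mul_sum _ _ _).symm
      _ = ∑ j, μ j := by
          refine Finset.sum_congr rfl fun j _ => ?_
          rw [claim3 j, mul_one]


end Heron
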